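/- Consider the quadratic minimax problem min over x ∈ ℝ^{n_x} max over y ∈ ℝ^{n_y} of f(z) = ½zᵀGz + cᵀz subject to Dz + h ≤ 0, where z = (x,y), G = [[G₁₁, G₁₂],[G₁₂ᵀ, G₂₂]] with G₁₁ symmetric and G₂₂ symmetric negative definite, D = [A B] ∈ ℝ^{m×(n_x+n_y)}, and Y(x) = { y : Ax + By + h ≤ 0 }. Let z* = (x*, y*) with y* ∈ Y(x*), λ* ∈ ℝ^m, and let I = { i : D_i z* + h_i = 0 } be the active set. Suppose: (i) Gz* + c + Dᵀλ* = 0; (ii) λ* ≤ 0, Dz* + h ≤ 0, and λ_i*(D_i z* + h_i) = 0 for all i; (iii) strict complementarity: λ_i* + D_i z* + h_i < 0 for all i = 1,…,m; (iv) the rows { B_i : i ∈ I } are linearly independent; (v) the matrix G₁₁ − [G₁₂ A_Iᵀ]·[[G₂₂, B_Iᵀ],[B_I, 0]]⁻¹·[G₁₂ᵀ; A_I] is positive definite. Then there exist ε₀ > 0, δ₁ > 0, ε₁ ∈ (0, ε₀), γ₁ > 0, γ₂ > 0 such that for all x with ‖x − x*‖ ≤ δ₁ and all y ∈ Y(x*)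 with ‖y − y*‖ ≤ ε₁: f(x*, y) + (γ₁/2)‖y − y*‖² ≤ f(x*, y*) ≤ sup{ f(x, ω) : ω ∈ Y(x), ‖ω − y*‖ ≤ ε₀ } − (γ₂/2)‖x − x*‖². In particular, (x*, y*) is a local minimax point of the problem. -/

import Mathlib

open Matrix

/-- Euclidean norm of a vector in `ℝ^k`. -/
noncomputable def eucNorm {k : ℕ} (v : Fin k → ℝ) : ℝ := Real.sqrt (∑ i, v i ^ 2)

lemma enorm_eq_norm {k : ℕ} (v : Fin k → ℝ) :
    eucNorm v = ‖(WithLp.toLp 2 v : EuclideanSpace ℝ (Fin k))‖ := by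
  rw [EuclideanSpace.norm_eq]
  simp [eucNorm, Real.norm_eq_abs, sq_abs]

lemma enorm_nonneg' {k : ℕ} (v : Fin k → ℝ) : 0 ≤ eucNorm v := Real.sqrt_nonneg _

lemma abs_le_enorm {k : ℕ} (v : Fin k → ℝ) (i : Fin k) : |v i| ≤ eucNorm v := by
  rw [← Real.sqrt_sq_eq_abs]
  exact Real.sqrt_le_sqrt (Finset.single_le_sum (fun j _ => sq_nonneg (v j)) (Finset.mem_univ i))

lemma exists_linear_bound {a b : ℕ} (L : (Fin a → ℝ) →ₗ[ℝ] (Fin b → ℝ)) :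
    ∃ C > 0, ∀ p, eucNorm (L p) ≤ C * eucNorm p := by
  let L' : EuclideanSpace ℝ (Fin a) →ₗ[ℝ] EuclideanSpace ℝ (Fin b) :=
    (WithLp.linearEquiv 2 ℝ (Fin b → ℝ)).symm.toLinearMap ∘ₗ L ∘ₗ
      (WithLp.linearEquiv 2 ℝ (Fin a → ℝ)).toLinearMap
  let Lc := LinearMap.toContinuousLinearMap L'
  refine ⟨‖Lc‖ + 1, by positivity, fun p => ?_⟩
  rw [enorm_eq_norm, enorm_eq_norm]
  calc ‖(WithLp.toLp 2 (L p) : EuclideanSpace ℝ (Fin b))‖ = ‖Lc (WithLp.toLp 2 p)‖ := rfl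
    _ ≤ ‖Lc‖ * ‖(WithLp.toLp 2 p : EuclideanSpace ℝ (Fin a))‖ := Lc.le_opNorm _
    _ ≤ (‖Lc‖ + 1) * ‖(WithLp.toLp 2 p : EuclideanSpace ℝ (Fin a))‖ := by
        have := norm_nonneg (WithLp.toLp 2 p : EuclideanSpace ℝ (Fin a)); nlinarith [norm_nonneg Lc]

lemma quad_smul {k : ℕ} (M : Matrix (Fin k) (Fin k) ℝ) (t : ℝ) (v : Fin k → ℝ) :
    (t • v) ⬝ᵥ M *ᵥ (t • v) = t ^ 2 * (v ⬝ᵥ M *ᵥ v) := by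
  rw [Matrix.mulVec_smul, smul_dotProduct, dotProduct_smul]
  simp [smul_eq_mul]; ring

lemma posdef_quad_lower {k : ℕ} {M : Matrix (Fin k) (Fin k) ℝ} (hM : M.PosDef) :
    ∃ μ > 0, ∀ v : Fin k → ℝ, μ * eucNorm v ^ 2 ≤ v ⬝ᵥ M *ᵥ v := by
  classical
  set E := EuclideanSpace ℝ (Fin k)
  have hcont : Continuous fun v : E => (v : Fin k → ℝ) ⬝ᵥ M *ᵥ (v : Fin k → ℝ) := by
    unfold dotProduct Matrix.mulVec
    exact continuous_finset_sum _ fun i _ => ((by fun_prop : Continuous fun v : EuclideanSpace ℝ (Fin k) => v.ofLp i).mul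
      (continuous_finset_sum _ fun j _ => (continuous_const.mul (by fun_prop : Continuous fun v : EuclideanSpace ℝ (Fin k) => v.ofLp j))))
  by_cases hne : (Metric.sphere (0 : E) 1).Nonempty
  · obtain ⟨v₀, hv₀mem, hv₀min⟩ :=
      (isCompact_sphere (0 : E) 1).exists_isMinOn hne hcont.continuousOn
    have hv₀norm : ‖v₀‖ = 1 := by simpa using mem_sphere_zero_iff_norm.mp hv₀mem
    have hv₀ne : (v₀ : Fin k → ℝ) ≠ 0 := by
      intro h0
      have : ‖v₀‖ = 0 := by
        have : v₀ = (0 : E) := WithLp.ofLp_injective 2 h0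
        simp [this]
      rw [hv₀norm] at this; norm_num at this
    have hμpos : 0 < (v₀ : Fin k → ℝ) ⬝ᵥ M *ᵥ (v₀ : Fin k → ℝ) := by
      have := hM.dotProduct_mulVec_pos hv₀ne
      simpa using this
    refine ⟨_, hμpos, fun v => ?_⟩
    by_cases hv : v = 0
    · simp [hv, eucNorm]
    · set t : ℝ := ‖(WithLp.toLp 2 v : E)‖ with ht
      have htpos : 0 < t := by
        rw [ht]; rw [norm_pos_iff]; simpa using hv
      have hunit : (WithLp.toLp 2 (t⁻¹ • v) : E) ∈ Metric.sphere (0 : E) 1 := by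
        rw [mem_sphere_zero_iff_norm]
        rw [WithLp.toLp_smul, norm_smul]
        simp [← ht, abs_of_pos htpos, abs_of_pos (inv_pos.mpr htpos), inv_mul_cancel₀ (ne_of_gt htpos)]
      have hmin := hv₀min hunit
      have hscale : (t⁻¹ • v) ⬝ᵥ M *ᵥ (t⁻¹ • v) = t⁻¹ ^ 2 * (v ⬝ᵥ M *ᵥ v) := quad_smul M _ v
      have henorm : eucNorm v = t := enorm_eq_norm v
      rw [henorm]
      have : (v₀ : Fin k → ℝ) ⬝ᵥ M *ᵥ (v₀ : Fin k → ℝ) ≤ t⁻¹ ^ 2 * (v ⬝ᵥ M *ᵥ v) := by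
        rw [← hscale]; exact hmin
      have h2 := mul_le_mul_of_nonneg_right this (sq_nonneg t)
      have h3 : (t⁻¹ ^ 2 * (v ⬝ᵥ M *ᵥ v)) * t ^ 2 = v ⬝ᵥ M *ᵥ v := by
        field_simp
      linarith [h2, h3.symm ▸ h2]
  · refine ⟨1, one_pos, fun v => ?_⟩
    have hv : v = 0 := by
      by_contra hv
      have htpos : 0 < ‖(WithLp.toLp 2 v : E)‖ := by rw [norm_pos_iff]; simpa using hv
      exact hne ⟨(‖(WithLp.toLp 2 v : E)‖⁻¹ • WithLp.toLp 2 v : E), by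
        rw [mem_sphere_zero_iff_norm, norm_smul]
        simp [abs_of_pos (inv_pos.mpr htpos), inv_mul_cancel₀ (ne_of_gt htpos)]⟩
    simp [hv, eucNorm]

lemma block_unit {ny : ℕ} {ι : Type*} [Fintype ι] [DecidableEq ι]
    (G22 : Matrix (Fin ny) (Fin ny) ℝ) (hG22nd : (-G22).PosDef)
    (BI : Matrix ι (Fin ny) ℝ)
    (hBI : LinearIndependent ℝ (fun i : ι => (BI i : Fin ny → ℝ))) :
    IsUnit (Matrix.fromBlocks G22 BIᵀ BI (0 : Matrix ι ι ℝ)).det := by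
  classical
  rw [← Matrix.isUnit_iff_isUnit_det, ← Matrix.mulVec_injective_iff_isUnit]
  set M := Matrix.fromBlocks G22 BIᵀ BI (0 : Matrix ι ι ℝ) with hM
  have key : ∀ v, M *ᵥ v = 0 → v = 0 := by
    intro v hv
    set a : Fin ny → ℝ := fun j => v (Sum.inl j)
    set b : ι → ℝ := fun i => v (Sum.inr i)
    have hvelim : v = Sum.elim a b := by funext i; cases i <;> rfl
    rw [hvelim, hM, Matrix.fromBlocks_mulVec] at hv
    have h1 : G22 *ᵥ a + BIᵀ *ᵥ b = 0 := funext fun j => congrFun hv (Sum.inl j)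
    have h2 : BI *ᵥ a = 0 := by
      funext i
      have := congrFun hv (Sum.inr i)
      simpa [Matrix.zero_mulVec] using this
    have hq : a ⬝ᵥ G22 *ᵥ a + (BI *ᵥ a) ⬝ᵥ b = 0 := by
      have h0 : a ⬝ᵥ (G22 *ᵥ a + BIᵀ *ᵥ b) = 0 := by rw [h1]; simp
      have hsw : a ⬝ᵥ BIᵀ *ᵥ b = (BI *ᵥ a) ⬝ᵥ b := by
        rw [dotProduct_mulVec, Matrix.vecMul_transpose]
      rwa [dotProduct_add, hsw] at h0
    rw [h2, zero_dotProduct, add_zero] at hq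
    have ha : a = 0 := by
      by_contra hne
      have := hG22nd.dotProduct_mulVec_pos hne
      rw [Matrix.neg_mulVec, dotProduct_neg] at this
      simp only [star_trivial] at this
      rw [hq] at this
      norm_num at this
    have hBb : BIᵀ *ᵥ b = 0 := by
      rw [ha, Matrix.mulVec_zero, zero_add] at h1; exact h1
    have hb : b = 0 := by
      have hsum : ∑ i, b i • (BI i : Fin ny → ℝ) = 0 := by
        funext j
        have := congrFun hBb j
        simpa [Matrix.mulVec, dotProduct, Matrix.transpose_apply, mul_comm,
          Finset.sum_apply] using this
      funext i
      exact Fintype.linearIndependent_iff.mp hBI b hsum i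
    rw [hvelim, ha, hb]; funext i; cases i <;> rfl
  intro v w hvw
  have := key (v - w) (by rw [Matrix.mulVec_sub, hvw, sub_self])
  exact sub_eq_zero.mp this

lemma quad_expand {n : Type*} [Fintype n] (G : Matrix n n ℝ) (hG : Gᵀ = G) (a d cc : n → ℝ) :
    (1/2 : ℝ) * ((a + d) ⬝ᵥ G *ᵥ (a + d)) + cc ⬝ᵥ (a + d)
      = ((1/2 : ℝ) * (a ⬝ᵥ G *ᵥ a) + cc ⬝ᵥ a) + d ⬝ᵥ (G *ᵥ a + cc)
        + (1/2 : ℝ) * (d ⬝ᵥ G *ᵥ d) := by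
  have hsw : a ⬝ᵥ G *ᵥ d = d ⬝ᵥ G *ᵥ a := by
    conv_lhs => rw [← hG]
    rw [dotProduct_mulVec, Matrix.vecMul_transpose, dotProduct_comm]
  simp only [Matrix.mulVec_add, dotProduct_add, add_dotProduct]
  rw [hsw, dotProduct_comm cc d]; ring

/-- Second-order sufficient optimality conditions for the inequality-constrained
quadratic minimax problem: under KKT, strict complementarity, linear independence of
the active rows of `B`, and positive definiteness of the Schur-type matrix `Γ`, the
point `(x*, y*)` is a (quantitative) local minimax point. -/
theorem stmt_18 {nx ny m : ℕ}
    (G11 : Matrix (Fin nx) (Fin nx) ℝ) (G12 : Matrix (Fin nx) (Fin ny) ℝ)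
    (G22 : Matrix (Fin ny) (Fin ny) ℝ)
    (hG11 : G11.IsSymm) (hG22 : G22.IsSymm) (hG22nd : (-G22).PosDef)
    (A : Matrix (Fin m) (Fin nx) ℝ) (B : Matrix (Fin m) (Fin ny) ℝ)
    (cx : Fin nx → ℝ) (cy : Fin ny → ℝ) (h : Fin m → ℝ)
    (G : Matrix (Fin nx ⊕ Fin ny) (Fin nx ⊕ Fin ny) ℝ)
    (hG : G = Matrix.fromBlocks G11 G12 G12ᵀ G22)
    (c : Fin nx ⊕ Fin ny → ℝ) (hc : c = Sum.elim cx cy)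
    (D : Matrix (Fin m) (Fin nx ⊕ Fin ny) ℝ) (hD : D = Matrix.fromCols A B)
    (f : (Fin nx → ℝ) → (Fin ny → ℝ) → ℝ)
    (hf : ∀ x y, f x y = (1 / 2) * (Sum.elim x y ⬝ᵥ G *ᵥ Sum.elim x y) + c ⬝ᵥ Sum.elim x y)
    (xstar : Fin nx → ℝ) (ystar : Fin ny → ℝ)
    (zstar : Fin nx ⊕ Fin ny → ℝ) (hzstar : zstar = Sum.elim xstar ystar)
    (hfeas : ∀ i, (A *ᵥ xstar + B *ᵥ ystar + h) i ≤ 0)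
    (lamstar : Fin m → ℝ)
    -- the active index set
    (I : Finset (Fin m)) (hI : ∀ i, i ∈ I ↔ (D *ᵥ zstar + h) i = 0)
    -- (i) stationarity
    (hstat : G *ᵥ zstar + c + Dᵀ *ᵥ lamstar = 0)
    -- (ii) complementarity with sign conditions
    (hsign : ∀ i, lamstar i ≤ 0)
    (hprim : ∀ i, (D *ᵥ zstar + h) i ≤ 0)
    (hcomp : ∀ i, lamstar i * ((D *ᵥ zstar + h) i) = 0)
    -- (iii) strict complementarity
    (hstrict : ∀ i, lamstar i + (D *ᵥ zstar + h) i < 0)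
    -- (iv) linear independence of the active rows of B
    (hBI : LinearIndependent ℝ (fun i : {i // i ∈ I} => B i.val))
    -- (v) positive definiteness of Γ_I
    (AI : Matrix {i // i ∈ I} (Fin nx) ℝ) (hAI : AI = Matrix.of fun i j => A i.val j)
    (BI : Matrix {i // i ∈ I} (Fin ny) ℝ) (hBIdef : BI = Matrix.of fun i j => B i.val j)
    (hΓ : (G11 - Matrix.fromCols G12 AIᵀ * (Matrix.fromBlocks G22 BIᵀ BI 0)⁻¹ *
      Matrix.fromRows G12ᵀ AI).PosDef) :
    ∃ ε₀ > (0 : ℝ), ∃ δ₁ > (0 : ℝ), ∃ ε₁ > (0 : ℝ), ε₁ < ε₀ ∧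
      ∃ γ₁ > (0 : ℝ), ∃ γ₂ > (0 : ℝ),
        ∀ (x : Fin nx → ℝ) (y : Fin ny → ℝ),
          eucNorm (x - xstar) ≤ δ₁ →
          (∀ i, (A *ᵥ xstar + B *ᵥ y + h) i ≤ 0) →
          eucNorm (y - ystar) ≤ ε₁ →
          f xstar y + (γ₁ / 2) * eucNorm (y - ystar) ^ 2 ≤ f xstar ystar ∧
          f xstar ystar ≤
            sSup {v : ℝ | ∃ ω : Fin ny → ℝ,
                (∀ i, (A *ᵥ x + B *ᵥ ω + h) i ≤ 0) ∧
                eucNorm (ω - ystar) ≤ ε₀ ∧ v = f x ω} -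
              (γ₂ / 2) * eucNorm (x - xstar) ^ 2 := by
  classical
  subst hG hc hD hzstar
  -- basic facts
  have hGsym : (Matrix.fromBlocks G11 G12 G12ᵀ G22)ᵀ = Matrix.fromBlocks G11 G12 G12ᵀ G22 := by
    rw [Matrix.fromBlocks_transpose, Matrix.transpose_transpose, hG11.eq, hG22.eq]
  have hDs : Matrix.fromCols A B *ᵥ Sum.elim xstar ystar = A *ᵥ xstar + B *ᵥ ystar :=
    Matrix.fromCols_mulVec_sumElim _ _ _ _
  have hI' : ∀ i, i ∈ I ↔ (A *ᵥ xstar + B *ᵥ ystar + h) i = 0 := by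
    intro i; rw [← hDs]; exact hI i
  have hlam0 : ∀ i ∉ I, lamstar i = 0 := by
    intro i hi
    rcases mul_eq_zero.mp (hcomp i) with h0 | h0
    · exact h0
    · exact absurd ((hI i).mpr h0) hi
  have hslack : ∀ i ∉ I, (A *ᵥ xstar + B *ᵥ ystar + h) i < 0 := fun i hi =>
    lt_of_le_of_ne (hfeas i) fun he => hi ((hI' i).mpr he)
  have hstat' : Matrix.fromBlocks G11 G12 G12ᵀ G22 *ᵥ Sum.elim xstar ystar + Sum.elim cx cy
      = -((Matrix.fromCols A B)ᵀ *ᵥ lamstar) := eq_neg_of_add_eq_zero_left hstat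
  have hlinterm : ∀ δ : Fin nx ⊕ Fin ny → ℝ,
      δ ⬝ᵥ (Matrix.fromBlocks G11 G12 G12ᵀ G22 *ᵥ Sum.elim xstar ystar + Sum.elim cx cy)
        = -((Matrix.fromCols A B *ᵥ δ) ⬝ᵥ lamstar) := by
    intro δ
    rw [hstat', dotProduct_neg]
    congr 1
    rw [dotProduct_mulVec, Matrix.vecMul_transpose]
  -- row evaluation lemmas
  have hAIapp : ∀ (p : Fin nx → ℝ) (i : {i // i ∈ I}), (AI *ᵥ p) i = (A *ᵥ p) i.val := by
    intro p i; rw [hAI]; simp [Matrix.mulVec, dotProduct]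
  have hBIapp : ∀ (p : Fin ny → ℝ) (i : {i // i ∈ I}), (BI *ᵥ p) i = (B *ᵥ p) i.val := by
    intro p i; rw [hBIdef]; simp [Matrix.mulVec, dotProduct]
  have hBIli : LinearIndependent ℝ (fun i : {i // i ∈ I} => (BI i : Fin ny → ℝ)) := by
    rw [hBIdef]; exact hBI
  -- the block matrix and its inverse
  have hMunit : IsUnit (Matrix.fromBlocks G22 BIᵀ BI
      (0 : Matrix {i // i ∈ I} {i // i ∈ I} ℝ)).det := block_unit G22 hG22nd BI hBIli
  set MM : Matrix (Fin ny ⊕ {i // i ∈ I}) (Fin ny ⊕ {i // i ∈ I}) ℝ :=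
    Matrix.fromBlocks G22 BIᵀ BI 0 with hMM
  have hMinv : MM * MM⁻¹ = 1 := Matrix.mul_nonsing_inv _ hMunit
  set Γ := G11 - Matrix.fromCols G12 AIᵀ * MM⁻¹ * Matrix.fromRows G12ᵀ AI with hΓdef
  set N := MM⁻¹ * Matrix.fromRows G12ᵀ AI with hN
  set U : Matrix (Fin ny) (Fin nx) ℝ := Matrix.of fun j k => -(N (Sum.inl j) k) with hU
  set V : Matrix {i // i ∈ I} (Fin nx) ℝ := Matrix.of fun i k => -(N (Sum.inr i) k) with hV
  have hUV : ∀ p : Fin nx → ℝ, Sum.elim (U *ᵥ p) (V *ᵥ p) = -(N *ᵥ p) := by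
    intro p; funext i
    cases i with
    | inl j => simp [hU, Matrix.mulVec, dotProduct, neg_mul, Finset.sum_neg_distrib]
    | inr i => simp [hV, Matrix.mulVec, dotProduct, neg_mul, Finset.sum_neg_distrib]
  have hMNp : ∀ p, MM *ᵥ Sum.elim (U *ᵥ p) (V *ᵥ p) = -(Matrix.fromRows G12ᵀ AI *ᵥ p) := by
    intro p
    rw [hUV p, Matrix.mulVec_neg, Matrix.mulVec_mulVec, hN, ← Matrix.mul_assoc, hMinv,
      Matrix.one_mul]
  have hEq1 : ∀ p, G22 *ᵥ (U *ᵥ p) + BIᵀ *ᵥ (V *ᵥ p) = -(G12ᵀ *ᵥ p) := by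
    intro p
    have hthis := hMNp p
    rw [hMM, Matrix.fromBlocks_mulVec, Matrix.fromRows_mulVec] at hthis
    funext j
    have h := congrFun hthis (Sum.inl j)
    simpa using h
  have hEq2 : ∀ p, BI *ᵥ (U *ᵥ p) = -(AI *ᵥ p) := by
    intro p
    have hthis := hMNp p
    rw [hMM, Matrix.fromBlocks_mulVec, Matrix.fromRows_mulVec] at hthis
    funext i
    have h := congrFun hthis (Sum.inr i)
    simpa [Matrix.zero_mulVec] using h
  have hΓp : ∀ p, G12 *ᵥ (U *ᵥ p) + AIᵀ *ᵥ (V *ᵥ p) = Γ *ᵥ p - G11 *ᵥ p := by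
    intro p
    have h1 : G12 *ᵥ (U *ᵥ p) + AIᵀ *ᵥ (V *ᵥ p)
        = Matrix.fromCols G12 AIᵀ *ᵥ Sum.elim (U *ᵥ p) (V *ᵥ p) := by
      rw [Matrix.fromCols_mulVec_sumElim]
    have h2 : Γ - G11 = -(Matrix.fromCols G12 AIᵀ * N) := by
      rw [hΓdef, hN, ← Matrix.mul_assoc, sub_sub_cancel_left]
    rw [h1, hUV p, Matrix.mulVec_neg, Matrix.mulVec_mulVec, ← Matrix.sub_mulVec, h2,
      Matrix.neg_mulVec]
  -- positive definiteness constants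
  obtain ⟨μ₁, hμ₁, hμ₁b⟩ := posdef_quad_lower hG22nd
  obtain ⟨μ₂, hμ₂, hμ₂b⟩ := posdef_quad_lower hΓ
  -- linear bounds
  obtain ⟨Cu, hCu, hCub⟩ := exists_linear_bound (Matrix.mulVecLin U)
  obtain ⟨Cl, hCl, hClb⟩ := exists_linear_bound (Matrix.mulVecLin (A + B * U))
  simp only [Matrix.mulVecLin_apply] at hCub hClb
  have hClb' : ∀ p, eucNorm (A *ᵥ p + B *ᵥ (U *ᵥ p)) ≤ Cl * eucNorm p := by
    intro p
    have := hClb p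
    rwa [Matrix.add_mulVec, ← Matrix.mulVec_mulVec] at this
  -- choice of δ₁
  obtain ⟨δ₁, hδpos, hδCu, hδCl⟩ :
      ∃ δ > (0:ℝ), Cu * δ ≤ 1 ∧ ∀ i ∉ I, Cl * δ ≤ -((A *ᵥ xstar + B *ᵥ ystar + h) i) := by
    by_cases hT : (Finset.univ.filter (fun i => i ∉ I)).Nonempty
    · set T := Finset.univ.filter (fun i => i ∉ I) with hTdef
      set t := min (1 / Cu) (T.inf' hT fun i => -((A *ᵥ xstar + B *ᵥ ystar + h) i) / Cl)
        with htdef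
      refine ⟨t, ?_, ?_, ?_⟩
      · apply lt_min (by positivity)
        rw [Finset.lt_inf'_iff]
        intro i hi
        have hi' : i ∉ I := by
          have := Finset.mem_filter.mp hi
          simpa using this.2
        have := hslack i hi'
        apply div_pos (by linarith) hCl
      · have h1 : t ≤ 1 / Cu := min_le_left _ _
        calc Cu * t ≤ Cu * (1 / Cu) := mul_le_mul_of_nonneg_left h1 hCu.le
          _ = 1 := by field_simp
      · intro i hi
        have hmem : i ∈ T := by
          rw [hTdef, Finset.mem_filter]; exact ⟨Finset.mem_univ _, hi⟩
        have h1 : t ≤ -((A *ᵥ xstar + B *ᵥ ystar + h) i) / Cl :=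
          le_trans (min_le_right _ _) (Finset.inf'_le _ hmem)
        calc Cl * t ≤ Cl * (-((A *ᵥ xstar + B *ᵥ ystar + h) i) / Cl) :=
              mul_le_mul_of_nonneg_left h1 hCl.le
          _ = -((A *ᵥ xstar + B *ᵥ ystar + h) i) := by field_simp
    · refine ⟨1 / Cu, by positivity, le_of_eq (mul_one_div_cancel (ne_of_gt hCu)), ?_⟩
      intro i hi
      exact absurd ⟨i, Finset.mem_filter.mpr ⟨Finset.mem_univ _, hi⟩⟩ hT
  refine ⟨1, one_pos, δ₁, hδpos, 1/2, by norm_num, by norm_num, μ₁, hμ₁, μ₂, hμ₂,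
    fun x y hx hyfeas hy => ⟨?_, ?_⟩⟩
  -- Part 1
  · set d := y - ystar with hd
    have hyd : y = ystar + d := by funext j; simp [hd]
    have hz' : Sum.elim xstar y = Sum.elim xstar ystar + Sum.elim (0 : Fin nx → ℝ) d := by
      funext i
      cases i with
      | inl k => simp
      | inr j => simp [hd]
    rw [hf xstar y, hf xstar ystar, hz', quad_expand _ hGsym]
    have hlinval : Sum.elim (0 : Fin nx → ℝ) d ⬝ᵥ
        (Matrix.fromBlocks G11 G12 G12ᵀ G22 *ᵥ Sum.elim xstar ystar + Sum.elim cx cy)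
          = -((B *ᵥ d) ⬝ᵥ lamstar) := by
      rw [hlinterm, Matrix.fromCols_mulVec_sumElim, Matrix.mulVec_zero, zero_add]
    have hlin1 : 0 ≤ (B *ᵥ d) ⬝ᵥ lamstar := by
      rw [dotProduct]
      apply Finset.sum_nonneg
      intro i _
      by_cases hi : i ∈ I
      · have hBy : B *ᵥ y = B *ᵥ ystar + B *ᵥ d := by rw [hyd, Matrix.mulVec_add]
        have hkey : (A *ᵥ xstar + B *ᵥ y + h) i
            = (A *ᵥ xstar + B *ᵥ ystar + h) i + (B *ᵥ d) i := by
          rw [hBy]; simp [Pi.add_apply]; ring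
        have h1 : (B *ᵥ d) i ≤ 0 := by
          have h2 := hyfeas i
          rw [hkey, (hI' i).mp hi] at h2
          linarith
        nlinarith [h1, hsign i]
      · simp [hlam0 i hi]
    have hquadeq : Sum.elim (0 : Fin nx → ℝ) d ⬝ᵥ
        (Matrix.fromBlocks G11 G12 G12ᵀ G22 *ᵥ Sum.elim (0 : Fin nx → ℝ) d)
          = d ⬝ᵥ G22 *ᵥ d := by
      rw [Matrix.fromBlocks_mulVec, sumElim_dotProduct_sumElim]
      simp [Matrix.mulVec_zero]
    have hquad1 : d ⬝ᵥ G22 *ᵥ d ≤ -(μ₁ * eucNorm d ^ 2) := by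
      have := hμ₁b d
      rw [Matrix.neg_mulVec, dotProduct_neg] at this
      linarith
    rw [hlinval, hquadeq]
    linarith
  -- Part 2
  · set p := x - xstar with hp
    have hxp : x = xstar + p := by funext k; simp [hp]
    set u := U *ᵥ p with hu
    set ν := V *ᵥ p with hν
    set ω := ystar + u with hω
    have hABpu : ∀ i ∈ I, (A *ᵥ p + B *ᵥ u) i = 0 := by
      intro i hi
      have h2 := congrFun (hEq2 p) ⟨i, hi⟩
      rw [← hu] at h2
      simp only [Pi.neg_apply] at h2
      rw [hBIapp, hAIapp] at h2
      simp [Pi.add_apply, h2]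
    have hfeasω : ∀ i, (A *ᵥ x + B *ᵥ ω + h) i ≤ 0 := by
      intro i
      have hA : A *ᵥ x = A *ᵥ xstar + A *ᵥ p := by rw [hxp, Matrix.mulVec_add]
      have hB : B *ᵥ ω = B *ᵥ ystar + B *ᵥ u := by rw [hω, Matrix.mulVec_add]
      have hsum : (A *ᵥ x + B *ᵥ ω + h) i
          = (A *ᵥ xstar + B *ᵥ ystar + h) i + (A *ᵥ p + B *ᵥ u) i := by
        rw [hA, hB]; simp [Pi.add_apply]; ring
      by_cases hi : i ∈ I
      · rw [hsum, (hI' i).mp hi, hABpu i hi]; norm_num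
      · have h1 := hslack i hi
        have h2 : (A *ᵥ p + B *ᵥ u) i ≤ Cl * eucNorm p := by
          have := hClb' p
          rw [← hu] at this
          exact le_trans (le_trans (le_abs_self _) (abs_le_enorm _ i)) this
        have h3 : Cl * eucNorm p ≤ Cl * δ₁ := mul_le_mul_of_nonneg_left hx hCl.le
        have h4 := hδCl i hi
        rw [hsum]
        linarith
    have hωy : ω - ystar = u := by funext j; simp [hω]
    have hωnorm : eucNorm (ω - ystar) ≤ 1 := by
      rw [hωy]
      have h1 := hCub p
      rw [← hu] at h1
      have h2 : Cu * eucNorm p ≤ Cu * δ₁ := mul_le_mul_of_nonneg_left hx hCu.le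
      linarith
    have hzxω : Sum.elim x ω = Sum.elim xstar ystar + Sum.elim p u := by
      funext i
      cases i with
      | inl k =>
        show x k = xstar k + p k
        rw [hp]; simp
      | inr j =>
        show ω j = ystar j + u j
        rw [hω]; simp
    have hval : f x ω = f xstar ystar + (1/2) * (p ⬝ᵥ Γ *ᵥ p) := by
      rw [hf x ω, hf xstar ystar, hzxω, quad_expand _ hGsym]
      have hlinval : Sum.elim p u ⬝ᵥ
          (Matrix.fromBlocks G11 G12 G12ᵀ G22 *ᵥ Sum.elim xstar ystar + Sum.elim cx cy)
            = 0 := by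
        rw [hlinterm, Matrix.fromCols_mulVec_sumElim, neg_eq_zero, dotProduct]
        apply Finset.sum_eq_zero
        intro i _
        by_cases hi : i ∈ I
        · rw [hABpu i hi, zero_mul]
        · rw [hlam0 i hi, mul_zero]
      have hquadval : Sum.elim p u ⬝ᵥ
          (Matrix.fromBlocks G11 G12 G12ᵀ G22 *ᵥ Sum.elim p u) = p ⬝ᵥ Γ *ᵥ p := by
        rw [Matrix.fromBlocks_mulVec, sumElim_dotProduct_sumElim]
        simp only [Sum.elim_comp_inl, Sum.elim_comp_inr]
        have hm : G12ᵀ *ᵥ p + G22 *ᵥ u = -(BIᵀ *ᵥ ν) := by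
          have h1 := hEq1 p
          rw [← hu, ← hν] at h1
          funext j
          have := congrFun h1 j
          simp only [Pi.add_apply, Pi.neg_apply] at this ⊢
          linarith
        have hm2 : u ⬝ᵥ (G12ᵀ *ᵥ p + G22 *ᵥ u) = p ⬝ᵥ AIᵀ *ᵥ ν := by
          rw [hm, dotProduct_neg]
          have hsw : u ⬝ᵥ BIᵀ *ᵥ ν = (BI *ᵥ u) ⬝ᵥ ν := by
            rw [dotProduct_mulVec, Matrix.vecMul_transpose]
          have hBIu : BI *ᵥ u = -(AI *ᵥ p) := by rw [hu]; exact hEq2 p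
          rw [hsw, hBIu, neg_dotProduct, neg_neg]
          conv_rhs => rw [dotProduct_mulVec, Matrix.vecMul_transpose]
        rw [hm2]
        have h3 := hΓp p
        rw [← hu, ← hν] at h3
        have h4 : p ⬝ᵥ (G12 *ᵥ u) + p ⬝ᵥ (AIᵀ *ᵥ ν)
            = p ⬝ᵥ (Γ *ᵥ p) - p ⬝ᵥ (G11 *ᵥ p) := by
          rw [← dotProduct_add, h3, dotProduct_sub]
        rw [dotProduct_add]
        linarith
      rw [hlinval, hquadval]; ring
    have hfge : f xstar ystar + μ₂/2 * eucNorm p ^ 2 ≤ f x ω := by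
      have := hμ₂b p
      rw [hval]
      linarith
    have hmem : f x ω ∈ {v : ℝ | ∃ ω' : Fin ny → ℝ,
        (∀ i, (A *ᵥ x + B *ᵥ ω' + h) i ≤ 0) ∧ eucNorm (ω' - ystar) ≤ 1 ∧ v = f x ω'} :=
      ⟨ω, hfeasω, hωnorm, rfl⟩
    have hcontf : Continuous fun w : EuclideanSpace ℝ (Fin ny) => f x (w : Fin ny → ℝ) := by
      have heq : (fun w : EuclideanSpace ℝ (Fin ny) => f x (w : Fin ny → ℝ))
          = fun w : EuclideanSpace ℝ (Fin ny) =>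
            (1/2) * (Sum.elim x (w : Fin ny → ℝ) ⬝ᵥ (Matrix.fromBlocks G11 G12 G12ᵀ G22)
              *ᵥ Sum.elim x (w : Fin ny → ℝ)) + Sum.elim cx cy ⬝ᵥ Sum.elim x (w : Fin ny → ℝ) := by
        funext w; rw [hf]
      rw [heq]
      have helim : ∀ i : Fin nx ⊕ Fin ny,
          Continuous fun w : EuclideanSpace ℝ (Fin ny) => Sum.elim x (w : Fin ny → ℝ) i := by
        intro i
        cases i with
        | inl k => exact continuous_const
        | inr j => exact (by fun_prop : Continuous fun w : EuclideanSpace ℝ (Fin ny) => (w : Fin ny → ℝ) j)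
      apply Continuous.add
      · apply Continuous.mul continuous_const
        unfold dotProduct Matrix.mulVec
        exact continuous_finset_sum _ fun i _ => ((helim i).mul
          (continuous_finset_sum _ fun j _ => continuous_const.mul (helim j)))
      · unfold dotProduct
        exact continuous_finset_sum _ fun i _ => continuous_const.mul (helim i)
    have hbdd : BddAbove {v : ℝ | ∃ ω' : Fin ny → ℝ,
        (∀ i, (A *ᵥ x + B *ᵥ ω' + h) i ≤ 0) ∧ eucNorm (ω' - ystar) ≤ 1 ∧ v = f x ω'} := by
      have hcomp : IsCompact (Metric.closedBall
          (WithLp.toLp 2 ystar : EuclideanSpace ℝ (Fin ny)) 1) := isCompact_closedBall _ _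
      have himg := hcomp.bddAbove_image hcontf.continuousOn
      refine BddAbove.mono ?_ himg
      rintro v ⟨ω', hfeas', hn', rfl⟩
      refine ⟨WithLp.toLp 2 ω', ?_, rfl⟩
      rw [Metric.mem_closedBall, dist_eq_norm]
      rw [enorm_eq_norm] at hn'
      exact hn'
    have hle := le_csSup hbdd hmem
    linarith
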